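/- Let H be an infinite-dimensional complex Hilbert space. For every k ≥ 1, the inductive geometric mean Gₖ is self-dual: for every k-tuple (A₁,…,Aₖ) of positive definite invertible bounded operators on H, Gₖ(A₁^{−1}, …, Aₖ^{−1}) = Gₖ(A₁,…,Aₖ)^{−1}. -/

import Mathlib

set_option synthInstance.maxHeartbeats 400000
set_option maxHeartbeats 1000000

set_option linter.unusedSectionVars false

noncomputable section

open scoped NNReal

variable {H : Type*} [NormedAddCommGroup H] [InnerProductSpace ℂ H] [CompleteSpace H]

/-- `a` is a positive definite invertible bounded operator. -/
def IsPosDefInv (a : H →L[ℂ] H) : Prop := 0 ≤ a ∧ IsUnit a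

/-- The inductive geometric mean: `indGM k` is the geometric mean `G_{k+1}` of `k+1`
operator variables, defined recursively by `G₁(A) = A` and
`G_{k+1}(A₁,…,A_{k+1}) = A_{k+1}^{1/2} Gₖ(A_{k+1}^{-1/2}A₁A_{k+1}^{-1/2},…,A_{k+1}^{-1/2}AₖA_{k+1}^{-1/2})^{k/(k+1)} A_{k+1}^{1/2}`,
with fractional powers taken via the continuous functional calculus. -/
noncomputable def indGM : (k : ℕ) → (Fin (k + 1) → (H →L[ℂ] H)) → (H →L[ℂ] H)
  | 0, A => A 0
  | (k + 1), A =>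
      CFC.sqrt (A (Fin.last (k + 1))) *
        CFC.rpow
          (indGM k (fun i : Fin (k + 1) =>
            CFC.sqrt (Ring.inverse (A (Fin.last (k + 1)))) * A i.castSucc *
              CFC.sqrt (Ring.inverse (A (Fin.last (k + 1))))))
          ((k + 1 : ℝ) / (k + 2)) *
        CFC.sqrt (A (Fin.last (k + 1)))

/-! ### Auxiliary lemmas -/

lemma indGM.aux_inverse_eq_of_mul {a b : H →L[ℂ] H} (h1 : a * b = 1) (h2 : b * a = 1) :
    Ring.inverse a = b :=
  Ring.inverse_unit ⟨a, b, h1, h2⟩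

lemma indGM.aux_inverse_inverse {a : H →L[ℂ] H} (hu : IsUnit a) :
    Ring.inverse (Ring.inverse a) = a := by
  obtain ⟨u, rfl⟩ := hu
  rw [Ring.inverse_unit, Ring.inverse_unit, inv_inv]

lemma indGM.aux_inverse_mul3 {a b c : H →L[ℂ] H} (ha : IsUnit a) (hb : IsUnit b)
    (hc : IsUnit c) :
    Ring.inverse (a * b * c) = Ring.inverse c * Ring.inverse b * Ring.inverse a := by
  obtain ⟨u, rfl⟩ := ha; obtain ⟨v, rfl⟩ := hb; obtain ⟨w, rfl⟩ := hc
  simp only [mul_assoc, ← Units.val_mul, Ring.inverse_unit, mul_inv_rev]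

lemma indGM.aux_isUnit_sqrt {a : H →L[ℂ] H} (ha : 0 ≤ a) (hu : IsUnit a) :
    IsUnit (CFC.sqrt a) := by
  rw [CFC.sqrt_eq_cfc]
  exact isUnit_cfc (⇑NNReal.sqrt) a (by fun_prop) ha fun x hx hx0 =>
    spectrum.zero_notMem ℝ≥0 hu (NNReal.sqrt_eq_zero.mp hx0 ▸ hx)

lemma indGM.aux_isUnit_rpow {a : H →L[ℂ] H} (ha : 0 ≤ a) (hu : IsUnit a) (x : ℝ) :
    IsUnit (CFC.rpow a x) :=
  ⟨⟨CFC.rpow a x, CFC.rpow a (-x),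
    CFC.rpow_mul_rpow_neg x (hu.isStrictlyPositive ha),
    CFC.rpow_neg_mul_rpow x (hu.isStrictlyPositive ha)⟩, rfl⟩

lemma indGM.aux_inverse_rpow {a : H →L[ℂ] H} (ha : 0 ≤ a) (hu : IsUnit a) (x : ℝ) :
    CFC.rpow (Ring.inverse a) x = Ring.inverse (CFC.rpow a x) := by
  obtain ⟨u, rfl⟩ := hu
  have h0 : IsStrictlyPositive (u : H →L[ℂ] H) := u.isUnit.isStrictlyPositive ha
  rw [Ring.inverse_unit]
  calc CFC.rpow (↑u⁻¹ : H →L[ℂ] H) x = CFC.rpow (↑u : H →L[ℂ] H) (-x) :=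
        (CFC.rpow_neg u x ha).symm
    _ = Ring.inverse (CFC.rpow (↑u : H →L[ℂ] H) x) :=
        (indGM.aux_inverse_eq_of_mul (CFC.rpow_mul_rpow_neg x h0)
          (CFC.rpow_neg_mul_rpow x h0)).symm

lemma indGM.aux_inverse_nonneg {a : H →L[ℂ] H} (ha : 0 ≤ a) (hu : IsUnit a) :
    0 ≤ Ring.inverse a := by
  obtain ⟨u, rfl⟩ := hu
  rw [Ring.inverse_unit, ← CFC.rpow_neg_one_eq_inv u ha]
  exact CFC.rpow_nonneg

lemma indGM.aux_inverse_sqrt {a : H →L[ℂ] H} (ha : 0 ≤ a) (hu : IsUnit a) :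
    CFC.sqrt (Ring.inverse a) = Ring.inverse (CFC.sqrt a) := by
  have h1 : CFC.sqrt (Ring.inverse a) = CFC.rpow (Ring.inverse a) (1 / 2 : ℝ) :=
    CFC.sqrt_eq_rpow
  have h2 : CFC.sqrt a = CFC.rpow a (1 / 2 : ℝ) := CFC.sqrt_eq_rpow
  rw [h1, h2, indGM.aux_inverse_rpow ha hu]

lemma indGM.aux_isPosDefInv_conj {a b : H →L[ℂ] H} (hb : IsPosDefInv b) (ha : 0 ≤ a)
    (hau : IsUnit a) : IsPosDefInv (a * b * a) :=
  ⟨(IsSelfAdjoint.of_nonneg ha).conjugate_nonneg hb.1, (hau.mul hb.2).mul hau⟩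

lemma isPosDefInv_indGM :
    ∀ (k : ℕ) (A : Fin (k + 1) → (H →L[ℂ] H)), (∀ i, IsPosDefInv (A i)) →
      IsPosDefInv (indGM k A)
  | 0, A, hA => hA 0
  | (k + 1), A, hA => by
    have hS := hA (Fin.last (k + 1))
    have hSi : IsPosDefInv (Ring.inverse (A (Fin.last (k + 1)))) :=
      ⟨indGM.aux_inverse_nonneg hS.1 hS.2, hS.2.ringInverse⟩
    have hsq : IsPosDefInv (CFC.sqrt (Ring.inverse (A (Fin.last (k + 1))))) :=
      ⟨CFC.sqrt_nonneg _, indGM.aux_isUnit_sqrt hSi.1 hSi.2⟩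
    have hB : ∀ i : Fin (k + 1),
        IsPosDefInv (CFC.sqrt (Ring.inverse (A (Fin.last (k + 1)))) * A i.castSucc *
          CFC.sqrt (Ring.inverse (A (Fin.last (k + 1))))) :=
      fun i => indGM.aux_isPosDefInv_conj (hA i.castSucc) hsq.1 hsq.2
    have hX := isPosDefInv_indGM k _ hB
    have hrp : IsPosDefInv (CFC.rpow (indGM k (fun i : Fin (k + 1) =>
        CFC.sqrt (Ring.inverse (A (Fin.last (k + 1)))) * A i.castSucc *
          CFC.sqrt (Ring.inverse (A (Fin.last (k + 1)))))) ((k + 1 : ℝ) / (k + 2))) :=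
      ⟨CFC.rpow_nonneg, indGM.aux_isUnit_rpow hX.1 hX.2 _⟩
    have hsqS : IsPosDefInv (CFC.sqrt (A (Fin.last (k + 1)))) :=
      ⟨CFC.sqrt_nonneg _, indGM.aux_isUnit_sqrt hS.1 hS.2⟩
    show IsPosDefInv (indGM (k + 1) A)
    rw [indGM]
    exact indGM.aux_isPosDefInv_conj hrp hsqS.1 hsqS.2

/-- **Self-duality of the inductive geometric mean.**
`Gₖ(A₁⁻¹,…,Aₖ⁻¹) = Gₖ(A₁,…,Aₖ)⁻¹` for positive definite invertible operators. -/
theorem indGM_self_dual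
    (hH : ¬ FiniteDimensional ℂ H) (k : ℕ)
    (A : Fin (k + 1) → (H →L[ℂ] H)) (hA : ∀ i, IsPosDefInv (A i)) :
    indGM k (fun i => Ring.inverse (A i)) = Ring.inverse (indGM k A) := by
  induction k with
  | zero => rfl
  | succ k ih =>
    have hS := hA (Fin.last (k + 1))
    have hSi : IsPosDefInv (Ring.inverse (A (Fin.last (k + 1)))) :=
      ⟨indGM.aux_inverse_nonneg hS.1 hS.2, hS.2.ringInverse⟩
    have hsq : IsPosDefInv (CFC.sqrt (Ring.inverse (A (Fin.last (k + 1))))) :=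
      ⟨CFC.sqrt_nonneg _, indGM.aux_isUnit_sqrt hSi.1 hSi.2⟩
    have hB : ∀ i : Fin (k + 1),
        IsPosDefInv (CFC.sqrt (Ring.inverse (A (Fin.last (k + 1)))) * A i.castSucc *
          CFC.sqrt (Ring.inverse (A (Fin.last (k + 1))))) :=
      fun i => indGM.aux_isPosDefInv_conj (hA i.castSucc) hsq.1 hsq.2
    have hX : IsPosDefInv (indGM k (fun i : Fin (k + 1) =>
        CFC.sqrt (Ring.inverse (A (Fin.last (k + 1)))) * A i.castSucc *
          CFC.sqrt (Ring.inverse (A (Fin.last (k + 1)))))) :=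
      isPosDefInv_indGM k _ hB
    have hsqS : IsPosDefInv (CFC.sqrt (A (Fin.last (k + 1)))) :=
      ⟨CFC.sqrt_nonneg _, indGM.aux_isUnit_sqrt hS.1 hS.2⟩
    -- `sqrt S = (sqrt (S⁻¹))⁻¹`
    have hsq_inv : CFC.sqrt (Ring.inverse (A (Fin.last (k + 1)))) =
        Ring.inverse (CFC.sqrt (A (Fin.last (k + 1)))) :=
      indGM.aux_inverse_sqrt hS.1 hS.2
    have hsq_inv' : CFC.sqrt (A (Fin.last (k + 1))) =
        Ring.inverse (CFC.sqrt (Ring.inverse (A (Fin.last (k + 1))))) := by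
      rw [← indGM.aux_inverse_sqrt hSi.1 hSi.2, indGM.aux_inverse_inverse hS.2]
    -- the key pointwise identity for the arguments of `indGM k`
    have hkey : ∀ i : Fin (k + 1),
        CFC.sqrt (Ring.inverse (Ring.inverse (A (Fin.last (k + 1))))) *
            Ring.inverse (A i.castSucc) *
          CFC.sqrt (Ring.inverse (Ring.inverse (A (Fin.last (k + 1))))) =
        Ring.inverse (CFC.sqrt (Ring.inverse (A (Fin.last (k + 1)))) * A i.castSucc *
          CFC.sqrt (Ring.inverse (A (Fin.last (k + 1))))) := by
      intro i
      rw [indGM.aux_inverse_mul3 hsq.2 (hA i.castSucc).2 hsq.2,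
        indGM.aux_inverse_inverse hS.2, hsq_inv']
    have hmain : indGM k (fun i : Fin (k + 1) =>
        Ring.inverse (CFC.sqrt (Ring.inverse (A (Fin.last (k + 1)))) * A i.castSucc *
          CFC.sqrt (Ring.inverse (A (Fin.last (k + 1)))))) =
        Ring.inverse (indGM k (fun i : Fin (k + 1) =>
          CFC.sqrt (Ring.inverse (A (Fin.last (k + 1)))) * A i.castSucc *
            CFC.sqrt (Ring.inverse (A (Fin.last (k + 1)))))) :=
      ih _ hB
    rw [indGM, indGM]
    simp only [hkey]
    rw [hmain, indGM.aux_inverse_rpow hX.1 hX.2]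
    rw [hsq_inv] at hX ⊢
    exact (indGM.aux_inverse_mul3 hsqS.2
      (indGM.aux_isUnit_rpow hX.1 hX.2 _) hsqS.2).symm
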